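/- Assume the Four Exponentials Conjecture: whenever x₁, x₂ are ℚ-linearly independent complex numbers and y₁, y₂ are ℚ-linearly independent complex numbers, at least one of the four numbers exp(x_i y_j) (i, j ∈ {1, 2}) is transcendental. Then for natural numbers a, b ≥ 2 and a real number t > 0, if all four of a, b, a^t, b^t are integers, then either t ∈ ℚ, or log a and log b are linearly dependent over ℚ (i.e. b = a^{k/m} for some positive integers k, m). -/
import Mathlib

theorem stmt_18
    (fourExp : ∀ x₁ x₂ y₁ y₂ : ℂ, LinearIndependent ℚ ![x₁, x₂] →
      LinearIndependent ℚ ![y₁, y₂] →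
      Transcendental ℚ (Complex.exp (x₁ * y₁)) ∨ Transcendental ℚ (Complex.exp (x₁ * y₂)) ∨
      Transcendental ℚ (Complex.exp (x₂ * y₁)) ∨ Transcendental ℚ (Complex.exp (x₂ * y₂)))
    (a b : ℕ) (ha : 2 ≤ a) (hb : 2 ≤ b) (t : ℝ) (ht : 0 < t)
    (hat : ∃ m : ℤ, (a : ℝ) ^ t = (m : ℝ)) (hbt : ∃ n : ℤ, (b : ℝ) ^ t = (n : ℝ)) :
    (∃ q : ℚ, t = (q : ℝ)) ∨
      ∃ k m : ℕ, 0 < k ∧ 0 < m ∧ (b : ℝ) = (a : ℝ) ^ ((k : ℝ) / (m : ℝ)) := by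
  by_contra hcon
  push_neg at hcon
  obtain ⟨hirr, hdep⟩ := hcon
  have ha0 : (0:ℝ) < a := by positivity
  have hb0 : (0:ℝ) < b := by positivity
  have ha1 : (1:ℝ) < a := by exact_mod_cast Nat.lt_of_lt_of_le one_lt_two ha
  have hb1 : (1:ℝ) < b := by exact_mod_cast Nat.lt_of_lt_of_le one_lt_two hb
  have hla : 0 < Real.log a := Real.log_pos ha1
  have hlb : 0 < Real.log b := Real.log_pos hb1
  -- linear independence of logs
  have hx : LinearIndependent ℚ ![((Real.log a : ℝ) : ℂ), ((Real.log b : ℝ) : ℂ)] := by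
    rw [LinearIndependent.pair_iff]
    intro s u h
    have h' : (s : ℝ) * Real.log a + (u : ℝ) * Real.log b = 0 := by
      have := h
      simp only [Rat.smul_def, mul_one] at this
      exact_mod_cast this
    by_cases hu : u = 0
    · subst hu
      rw [Rat.cast_zero, zero_mul, add_zero] at h'
      have hs : (s:ℝ) = 0 := (mul_eq_zero.mp h').resolve_right (ne_of_gt hla)
      exact ⟨by exact_mod_cast hs, rfl⟩
    · exfalso
      set q : ℚ := -s / u with hq
      have hqlb : Real.log b = (q : ℝ) * Real.log a := by
        push_cast [hq]
        field_simp
        have huR : (u:ℝ) ≠ 0 := by exact_mod_cast hu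
        field_simp at h' ⊢
        linarith
      have hqpos : 0 < q := by
        have : 0 < (q:ℝ) := by
          by_contra hle
          push_neg at hle
          nlinarith [mul_nonpos_of_nonpos_of_nonneg hle hla.le]
        exact_mod_cast this
      have hb_eq : (b : ℝ) = (a : ℝ) ^ ((q.num.toNat : ℝ) / (q.den : ℝ)) := by
        have hqcast : ((q.num.toNat : ℝ) / (q.den : ℝ)) = (q : ℝ) := by
          have hnum : (0:ℤ) < q.num := Rat.num_pos.mpr hqpos
          rw [Rat.cast_def]
          congr 1
          exact_mod_cast Int.toNat_of_nonneg hnum.le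
        rw [hqcast, Real.rpow_def_of_pos ha0, mul_comm, ← hqlb, Real.exp_log hb0]
      exact hdep q.num.toNat q.den (by
          have : (0:ℤ) < q.num := Rat.num_pos.mpr hqpos
          omega) q.pos hb_eq
  have hy : LinearIndependent ℚ ![(1 : ℂ), ((t : ℝ) : ℂ)] := by
    rw [LinearIndependent.pair_iff]
    intro s u h
    have h' : (s : ℝ) + (u : ℝ) * t = 0 := by
      have := h
      simp only [Rat.smul_def, mul_one] at this
      exact_mod_cast this
    by_cases hu : u = 0
    · subst hu
      rw [Rat.cast_zero, zero_mul, add_zero] at h'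
      exact ⟨by exact_mod_cast h', rfl⟩
    · exfalso
      apply hirr (-s / u)
      have huR : (u:ℝ) ≠ 0 := by exact_mod_cast hu
      push_cast
      field_simp
      linarith
  obtain ⟨m, hm⟩ := hat
  obtain ⟨n, hn⟩ := hbt
  have halg : ∀ z : ℤ, ¬ Transcendental ℚ ((z:ℂ)) := by
    intro z h; exact h (by exact_mod_cast (isAlgebraic_algebraMap ((z:ℚ))))
  have e1 : Complex.exp ((Real.log a : ℂ) * 1) = ((a:ℤ) : ℂ) := by
    rw [mul_one, ← Complex.ofReal_exp, Real.exp_log ha0]; push_cast; rfl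
  have e2 : Complex.exp ((Real.log a : ℂ) * (t:ℂ)) = ((m:ℤ) : ℂ) := by
    rw [← Complex.ofReal_mul, ← Complex.ofReal_exp, ← Real.rpow_def_of_pos ha0, hm]
    push_cast; rfl
  have e3 : Complex.exp ((Real.log b : ℂ) * 1) = ((b:ℤ) : ℂ) := by
    rw [mul_one, ← Complex.ofReal_exp, Real.exp_log hb0]; push_cast; rfl
  have e4 : Complex.exp ((Real.log b : ℂ) * (t:ℂ)) = ((n:ℤ) : ℂ) := by
    rw [← Complex.ofReal_mul, ← Complex.ofReal_exp, ← Real.rpow_def_of_pos hb0, hn]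
    push_cast; rfl
  rcases fourExp _ _ _ _ hx hy with h | h | h | h
  · rw [e1] at h; exact halg _ h
  · rw [e2] at h; exact halg _ h
  · rw [e3] at h; exact halg _ h
  · rw [e4] at h; exact halg _ h
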